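/- The dual cone of the extended Lorentz cone L = {(x,u) ∈ ℝ^p × ℝ^q : x ≥ ‖u‖e} is L* = {(x,u) ∈ ℝ^p × ℝ^q : eᵀx ≥ ‖u‖ and x ≥ 0}. -/

import Mathlib

open scoped RealInnerProductSpace

/-- The extended Lorentz cone `L = {(x,u) ∈ ℝ^p × ℝ^q : x ≥ ‖u‖e}`. -/
def extendedLorentzCone (p q : ℕ) :
    Set (EuclideanSpace ℝ (Fin p) × EuclideanSpace ℝ (Fin q)) :=
  {z | ∀ i, ‖z.2‖ ≤ z.1 i}

/-- The dual of a set `S ⊆ ℝ^p × ℝ^q`: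
`S* = {z : ⟨z, w⟩ ≥ 0 for all w ∈ S}`, with the inner product
`⟨(x,u),(y,v)⟩ = xᵀy + uᵀv`. -/
def dualSet (p q : ℕ)
    (S : Set (EuclideanSpace ℝ (Fin p) × EuclideanSpace ℝ (Fin q))) :
    Set (EuclideanSpace ℝ (Fin p) × EuclideanSpace ℝ (Fin q)) :=
  {z | ∀ w ∈ S, (0:ℝ) ≤ ⟪z.1, w.1⟫ + ⟪z.2, w.2⟫}

/-- The dual cone of the extended Lorentz cone is
`L* = {(x,u) : eᵀx ≥ ‖u‖ and x ≥ 0}`. -/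
theorem stmt1 (p q : ℕ) (hp : 0 < p) (hq : 0 < q) :
    dualSet p q (extendedLorentzCone p q) =
      {z | ‖z.2‖ ≤ ∑ i, z.1 i ∧ ∀ i, 0 ≤ z.1 i} := by
  ext ⟨y, v⟩
  simp only [dualSet, extendedLorentzCone, Set.mem_setOf_eq]
  constructor
  · intro h
    have hy : ∀ i, 0 ≤ y i := by
      intro i
      have hmem : ∀ j, ‖(0 : EuclideanSpace ℝ (Fin q))‖ ≤
          (EuclideanSpace.single i (1:ℝ)) j := by
        intro j
        simp [EuclideanSpace.single_apply]
        split <;> norm_num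
      have := h (EuclideanSpace.single i (1:ℝ), 0) hmem
      simpa [EuclideanSpace.inner_single_right] using this
    refine ⟨?_, hy⟩
    have hmem : ∀ j, ‖(-v : EuclideanSpace ℝ (Fin q))‖ ≤
        (WithLp.toLp 2 (fun _ => ‖v‖) : EuclideanSpace ℝ (Fin p)) j := by
      intro j; simp
    have hkey := h ((WithLp.toLp 2 (fun _ => ‖v‖) : EuclideanSpace ℝ (Fin p)), -v) hmem
    simp only [PiLp.inner_apply, RCLike.inner_apply, conj_trivial,
      inner_neg_right, WithLp.ofLp_toLp, mul_comm] at hkey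
    have hvv : ∑ x, v x * v x = ‖v‖ * ‖v‖ := by
      rw [← real_inner_self_eq_norm_mul_norm]
      simp only [PiLp.inner_apply, RCLike.inner_apply, conj_trivial]
    rcases eq_or_lt_of_le (norm_nonneg v) with h0 | h0
    · rw [← h0]
      exact Finset.sum_nonneg fun i _ => hy i
    · have : ‖v‖ * ‖v‖ ≤ ∑ i, y i * ‖v‖ := by nlinarith
      rw [← Finset.sum_mul] at this
      exact le_of_mul_le_mul_right (by linarith) h0
  · rintro ⟨hv, hy⟩ ⟨x, u⟩ hw
    simp only [Set.mem_setOf_eq] at hw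
    simp only [PiLp.inner_apply, RCLike.inner_apply, conj_trivial]
    have h2 : (∑ i, y i) * ‖u‖ ≤ ∑ i, y i * x i := by
      rw [Finset.sum_mul]
      exact Finset.sum_le_sum fun i _ => mul_le_mul_of_nonneg_left (hw i) (hy i)
    have h3 : ‖v‖ * ‖u‖ ≤ (∑ i, y i) * ‖u‖ :=
      mul_le_mul_of_nonneg_right hv (norm_nonneg u)
    have h4 : -(‖v‖ * ‖u‖) ≤ (⟪v, u⟫ : ℝ) := by
      have h5 := abs_real_inner_le_norm v u
      have h6 := neg_abs_le (⟪v, u⟫ : ℝ)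
      linarith
    have hin : (⟪v, u⟫ : ℝ) = ∑ x, v x * u x := by
      simp [PiLp.inner_apply, mul_comm]
    rw [hin] at h4
    simp only [mul_comm] at h2 h4 ⊢
    linarith
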